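/- arXiv:1805.10219 — 2 statements merged into one kernel-verified Lean document; each statement's English description precedes it below -/
import Mathlib

section
/- Let D^s ∈ ℝ^{d_s×d_s}, D^f ∈ ℝ^{d_f×d_f}, and for each n ∈ ℕ let M_n ∈ ℝ^{d_f×d_s} be arbitrary. Define the block lower-triangular matrices T_n = [[I + Δt D^s, 0],[M_n, I + δt D^f]]. If ρ(I + Δt D^s) < 1 and ρ(I + δt D^f) < 1 and sup_n ‖M_n‖ < ∞, then for any μ_0 ∈ ℝ^{d}, the sequence μ_{n+1} = T_n μ_n converges to 0. -/
open Matrix Filter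

attribute [local instance] Matrix.frobeniusNormedAddCommGroup

section Aux

open Finset
open scoped ENNReal NNReal

attribute [local instance] Matrix.frobeniusNormedRing Matrix.frobeniusNormedAlgebra

private lemma geomBound {m : ℕ} (A : Matrix (Fin m) (Fin m) ℝ)
    (h : spectralRadius ℂ (A.map (Complex.ofReal : ℝ → ℂ)) < 1) :
    ∃ C r : ℝ, 1 ≤ C ∧ 0 < r ∧ r < 1 ∧ ∀ n, ‖A ^ n‖ ≤ C * r ^ n := by
  set a := A.map (Complex.ofReal : ℝ → ℂ) with ha
  have hpow : ∀ n : ℕ, ‖A ^ n‖ = ‖a ^ n‖ := by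
    intro n
    have h1 : a ^ n = (A ^ n).map (Complex.ofReal : ℝ → ℂ) :=
      (map_pow (Complex.ofRealHom.mapMatrix) A n).symm
    rw [h1, Matrix.frobenius_norm_map_eq _ _ (fun x => Complex.norm_real x)]
  obtain ⟨r', hr'1, hr'2⟩ := exists_between (max_lt h (by norm_num : (1/2 : ℝ≥0∞) < 1))
  have hrtop : r' ≠ ⊤ := ne_top_of_lt hr'2
  have hrpos : (0:ℝ≥0∞) < r' :=
    lt_of_lt_of_le (by norm_num : (0:ℝ≥0∞) < 1/2) ((le_max_right _ _).trans hr'1.le)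
  set r : ℝ := r'.toReal with hr
  have hr0 : 0 < r := ENNReal.toReal_pos hrpos.ne' hrtop
  have hr1 : r < 1 := by
    rw [hr, ← ENNReal.toReal_one]
    exact ENNReal.toReal_strict_mono (by norm_num) hr'2
  have G := spectrum.pow_nnnorm_pow_one_div_tendsto_nhds_spectralRadius a
  have hev : ∀ᶠ n : ℕ in atTop, (‖a ^ n‖₊ : ℝ≥0∞) ^ (1 / (n:ℝ)) < r' :=
    G.eventually_lt_const (lt_of_le_of_lt (le_max_left _ _) hr'1)
  obtain ⟨N, hN⟩ := (hev.and (eventually_ge_atTop 1)).exists_forall_of_atTop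
  have key : ∀ n, N ≤ n → ‖A ^ n‖ ≤ r ^ n := by
    intro n hn
    have h1 := (hN n hn).1
    have hn1 : (1:ℕ) ≤ n := (hN n hn).2
    have hne : (n:ℝ) ≠ 0 := Nat.cast_ne_zero.mpr (by omega)
    have h2 : ((‖a ^ n‖₊ : ℝ≥0∞) ^ (1/(n:ℝ))) ^ (n:ℝ) ≤ r' ^ (n:ℝ) :=
      ENNReal.rpow_le_rpow h1.le (Nat.cast_nonneg n)
    have h3 : ((‖a ^ n‖₊ : ℝ≥0∞) ^ (1/(n:ℝ))) ^ (n:ℝ) = (‖a ^ n‖₊ : ℝ≥0∞) := by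
      rw [← ENNReal.rpow_mul, one_div, inv_mul_cancel₀ hne, ENNReal.rpow_one]
    rw [h3] at h2
    have h4 : ‖a ^ n‖ ≤ (r' ^ n).toReal := by
      rw [ENNReal.rpow_natCast] at h2
      have := ENNReal.toReal_mono (by exact ENNReal.pow_ne_top hrtop) h2
      simpa using this
    rw [hpow]
    calc ‖a ^ n‖ ≤ (r' ^ n).toReal := h4
      _ = r ^ n := by rw [ENNReal.toReal_pow]
  refine ⟨(∑ k ∈ Finset.range N, ‖A ^ k‖ / r ^ k) + 1, r, ?_, hr0, hr1, ?_⟩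
  · have : (0:ℝ) ≤ ∑ k ∈ Finset.range N, ‖A ^ k‖ / r ^ k :=
      Finset.sum_nonneg fun k _ => div_nonneg (norm_nonneg _) (pow_nonneg hr0.le _)
    linarith
  · intro n
    rcases lt_or_ge n N with hlt | hge
    · have h5 : ‖A ^ n‖ / r ^ n ≤ ∑ k ∈ Finset.range N, ‖A ^ k‖ / r ^ k :=
        Finset.single_le_sum (f := fun k => ‖A ^ k‖ / r ^ k)
          (fun k _ => div_nonneg (norm_nonneg _) (pow_nonneg hr0.le _))
          (Finset.mem_range.mpr hlt)
      have hrp : (0:ℝ) < r ^ n := pow_pos hr0 n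
      rw [div_le_iff₀ hrp] at h5
      nlinarith [pow_pos hr0 n]
    · have h6 := key n hge
      have : (1:ℝ) * r ^ n ≤ ((∑ k ∈ Finset.range N, ‖A ^ k‖ / r ^ k) + 1) * r ^ n := by
        apply mul_le_mul_of_nonneg_right _ (pow_pos hr0 n).le
        have : (0:ℝ) ≤ ∑ k ∈ Finset.range N, ‖A ^ k‖ / r ^ k :=
          Finset.sum_nonneg fun k _ => div_nonneg (norm_nonneg _) (pow_nonneg hr0.le _)
        linarith
      linarith [h6]

private lemma entryBound {m n : Type*} [Fintype m] [Fintype n] (A : Matrix m n ℝ) (i : m) (j : n) :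
    |A i j| ≤ ‖A‖ := by
  rw [Matrix.frobenius_norm_def]
  have h1 : ‖A i j‖ ^ (2:ℝ) ≤ ∑ i', ∑ j', ‖A i' j'‖ ^ (2:ℝ) := by
    calc ‖A i j‖ ^ (2:ℝ) ≤ ∑ j', ‖A i j'‖ ^ (2:ℝ) :=
          Finset.single_le_sum (fun k _ => Real.rpow_nonneg (norm_nonneg _) _) (Finset.mem_univ j)
      _ ≤ ∑ i', ∑ j', ‖A i' j'‖ ^ (2:ℝ) :=
          Finset.single_le_sum
            (fun k _ => Finset.sum_nonneg fun l _ => Real.rpow_nonneg (norm_nonneg _) _)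
            (Finset.mem_univ i)
  have h2 : |A i j| = (‖A i j‖ ^ (2:ℝ)) ^ (1/2:ℝ) := by
    rw [← Real.rpow_mul (norm_nonneg _)]
    norm_num [Real.norm_eq_abs]
  rw [h2]
  exact Real.rpow_le_rpow (Real.rpow_nonneg (norm_nonneg _) _) h1 (by norm_num)

/-- entrywise absolute sum of a matrix -/
private noncomputable def Kk {m n : Type*} [Fintype m] [Fintype n] (A : Matrix m n ℝ) : ℝ :=
  ∑ i, ∑ j, |A i j|

private lemma Kk_nonneg {m n : Type*} [Fintype m] [Fintype n] (A : Matrix m n ℝ) : 0 ≤ Kk A :=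
  Finset.sum_nonneg fun _ _ => Finset.sum_nonneg fun _ _ => abs_nonneg _

private lemma Kk_le {m n : Type*} [Fintype m] [Fintype n] (A : Matrix m n ℝ) :
    Kk A ≤ (Fintype.card m * Fintype.card n : ℕ) * ‖A‖ := by
  calc Kk A ≤ ∑ _i : m, ∑ _j : n, ‖A‖ :=
        Finset.sum_le_sum fun i _ => Finset.sum_le_sum fun j _ => entryBound A i j
    _ = (Fintype.card m * Fintype.card n : ℕ) * ‖A‖ := by
        simp only [Finset.sum_const, Finset.card_univ, nsmul_eq_mul]
        push_cast
        ring

private lemma Sl1_mulVec {m n : Type*} [Fintype m] [Fintype n] (A : Matrix m n ℝ) (v : n → ℝ) :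
    ∑ i, |(A *ᵥ v) i| ≤ Kk A * ∑ j, |v j| := by
  have hv : ∀ j : n, |v j| ≤ ∑ j', |v j'| :=
    fun j => Finset.single_le_sum (f := fun j' => |v j'|) (fun k _ => abs_nonneg _)
      (Finset.mem_univ j)
  calc ∑ i, |(A *ᵥ v) i| ≤ ∑ i, ∑ j, |A i j| * |v j| := by
        refine Finset.sum_le_sum fun i _ => ?_
        rw [Matrix.mulVec, dotProduct]
        exact (Finset.abs_sum_le_sum_abs _ _).trans (le_of_eq (by simp [abs_mul]))
    _ ≤ ∑ i, ∑ j, |A i j| * ∑ j', |v j'| := by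
        refine Finset.sum_le_sum fun i _ => Finset.sum_le_sum fun j _ => ?_
        exact mul_le_mul_of_nonneg_left (hv j) (abs_nonneg _)
    _ = Kk A * ∑ j, |v j| := by rw [Kk, Finset.sum_mul]; simp [Finset.sum_mul]

end Aux

set_option maxHeartbeats 1000000

/-- For block lower-triangular matrices
`T_n = [[I + Δt D^s, 0],[M_n, I + δt D^f]]` with `ρ(I + Δt D^s) < 1`, `ρ(I + δt D^f) < 1`
and uniformly bounded off-diagonal blocks `M_n`, the recursion `μ_{n+1} = T_n μ_n`
converges to `0` for every initial vector `μ_0`. -/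
theorem stmt11 {ds df : ℕ} (Ds : Matrix (Fin ds) (Fin ds) ℝ)
    (Df : Matrix (Fin df) (Fin df) ℝ) (M : ℕ → Matrix (Fin df) (Fin ds) ℝ)
    (Δt δt : ℝ)
    (hρs : spectralRadius ℂ ((1 + Δt • Ds).map (Complex.ofReal : ℝ → ℂ)) < 1)
    (hρf : spectralRadius ℂ ((1 + δt • Df).map (Complex.ofReal : ℝ → ℂ)) < 1)
    (hM : ∃ c : ℝ, ∀ n : ℕ, ‖M n‖ ≤ c)
    (μ : ℕ → (Fin ds ⊕ Fin df → ℝ))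
    (hrec : ∀ n : ℕ,
      μ (n + 1) = (Matrix.fromBlocks (1 + Δt • Ds) 0 (M n) (1 + δt • Df)) *ᵥ μ n) :
    Tendsto μ atTop (nhds 0) := by
  classical
  obtain ⟨C1, r, hC1, hr0, hr1, hA⟩ := geomBound (1 + Δt • Ds) hρs
  obtain ⟨C2, s, hC2, hs0, hs1, hB⟩ := geomBound (1 + δt • Df) hρf
  obtain ⟨c, hc⟩ := hM
  have hc0 : 0 ≤ c := le_trans (norm_nonneg (M 0)) (hc 0)
  set A := 1 + Δt • Ds with hAdef
  set B := 1 + δt • Df with hBdef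
  set x : ℕ → Fin ds → ℝ := fun n i => μ n (Sum.inl i) with hxdef
  set y : ℕ → Fin df → ℝ := fun n i => μ n (Sum.inr i) with hydef
  have hstep : ∀ n, x (n+1) = A *ᵥ x n ∧ y (n+1) = M n *ᵥ x n + B *ᵥ y n := by
    intro n
    have hμn : μ n = Sum.elim (x n) (y n) := by funext i; cases i <;> rfl
    have h := hrec n
    rw [hμn, Matrix.fromBlocks_mulVec] at h
    constructor
    · funext i
      have := congrFun h (Sum.inl i)
      simpa [Matrix.zero_mulVec] using this
    · funext i
      exact congrFun h (Sum.inr i)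
  have hxn : ∀ n, x n = (A ^ n) *ᵥ x 0 := by
    intro n
    induction n with
    | zero => simp
    | succ n ih => rw [(hstep n).1, ih, Matrix.mulVec_mulVec, ← pow_succ']
  have hyn : ∀ n, y n = (B ^ n) *ᵥ y 0
      + ∑ k ∈ Finset.range n, (B ^ (n - 1 - k)) *ᵥ (M k *ᵥ x k) := by
    intro n
    induction n with
    | zero => simp
    | succ n ih =>
      have hsum : B *ᵥ (∑ k ∈ Finset.range n, (B ^ (n-1-k)) *ᵥ (M k *ᵥ x k))
           = ∑ k ∈ Finset.range n, (B ^ (n - k)) *ᵥ (M k *ᵥ x k) := by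
        simp only [← Matrix.mulVecLin_apply, map_sum]
        refine Finset.sum_congr rfl fun k hk => ?_
        have hk' : k < n := Finset.mem_range.mp hk
        have he : n - k = (n - 1 - k) + 1 := by omega
        rw [he, pow_succ']
        simp only [Matrix.mulVecLin_apply, Matrix.mulVec_mulVec]
        rw [Matrix.mul_assoc]
      rw [(hstep n).2, ih, Matrix.mulVec_add, Matrix.mulVec_mulVec, ← pow_succ', hsum]
      simp only [Nat.add_sub_cancel, Finset.sum_range_succ, Nat.sub_self, pow_zero,
        Matrix.one_mulVec]
      abel
  -- constants
  set X0 : ℝ := ∑ i, |x 0 i| with hX0def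
  set Y0 : ℝ := ∑ i, |y 0 i| with hY0def
  have hX00 : 0 ≤ X0 := Finset.sum_nonneg fun _ _ => abs_nonneg _
  have hY00 : 0 ≤ Y0 := Finset.sum_nonneg fun _ _ => abs_nonneg _
  set CB : ℝ := (df:ℝ) * (df:ℝ) * C2 with hCBdef
  set CM : ℝ := (df:ℝ) * (ds:ℝ) * c with hCMdef
  set CX : ℝ := (ds:ℝ) * (ds:ℝ) * C1 * X0 with hCXdef
  have hCB0 : 0 ≤ CB := by positivity
  have hCM0 : 0 ≤ CM := by positivity
  have hCX0 : 0 ≤ CX := by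
    have h1 : (0:ℝ) ≤ C1 := le_trans zero_le_one hC1
    positivity
  have hKB : ∀ j : ℕ, Kk (B ^ j) ≤ CB * s ^ j := by
    intro j
    calc Kk (B ^ j) ≤ ((df * df : ℕ) : ℝ) * ‖B ^ j‖ := by simpa using Kk_le (B ^ j)
      _ ≤ ((df * df : ℕ) : ℝ) * (C2 * s ^ j) := by
          have := hB j
          have h0 : (0:ℝ) ≤ ((df * df : ℕ) : ℝ) := Nat.cast_nonneg _
          exact mul_le_mul_of_nonneg_left this h0
      _ = CB * s ^ j := by push_cast [hCBdef]; ring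
  have hKM : ∀ k : ℕ, Kk (M k) ≤ CM := by
    intro k
    calc Kk (M k) ≤ ((df * ds : ℕ) : ℝ) * ‖M k‖ := by simpa using Kk_le (M k)
      _ ≤ ((df * ds : ℕ) : ℝ) * c :=
          mul_le_mul_of_nonneg_left (hc k) (Nat.cast_nonneg _)
      _ = CM := by push_cast [hCMdef]; ring
  have hSx : ∀ n, ∑ i, |x n i| ≤ CX * r ^ n := by
    intro n
    calc ∑ i, |x n i| = ∑ i, |((A ^ n) *ᵥ x 0) i| := by rw [hxn n]
      _ ≤ Kk (A ^ n) * X0 := Sl1_mulVec _ _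
      _ ≤ (((ds * ds : ℕ) : ℝ) * ‖A ^ n‖) * X0 :=
          mul_le_mul_of_nonneg_right (by simpa using Kk_le (A ^ n)) hX00
      _ ≤ (((ds * ds : ℕ) : ℝ) * (C1 * r ^ n)) * X0 := by
          refine mul_le_mul_of_nonneg_right ?_ hX00
          exact mul_le_mul_of_nonneg_left (hA n) (Nat.cast_nonneg _)
      _ = CX * r ^ n := by push_cast [hCXdef]; ring
  -- the mixed geometric rate
  set t : ℝ := max r s with htdef
  have ht0 : 0 < t := lt_of_lt_of_le hr0 (le_max_left _ _)
  have ht1 : t < 1 := max_lt hr1 hs1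
  have hrt : r ≤ t := le_max_left _ _
  have hst : s ≤ t := le_max_right _ _
  set E : ℝ := CB * Y0 + CB * CM * CX with hEdef
  have hE0 : 0 ≤ E := by positivity
  have hSy : ∀ n, ∑ i, |y (n+1) i| ≤ E * ((n:ℝ) + 2) * t ^ n := by
    intro n
    have hyform : y (n+1) = (B ^ (n+1)) *ᵥ y 0
        + ∑ k ∈ Finset.range (n+1), (B ^ (n - k)) *ᵥ (M k *ᵥ x k) := by
      rw [hyn (n+1)]
      simp only [Nat.add_sub_cancel]
    have hB1 : ∑ i, |((B ^ (n+1)) *ᵥ y 0) i| ≤ CB * Y0 * t ^ n := by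
      calc ∑ i, |((B ^ (n+1)) *ᵥ y 0) i| ≤ Kk (B ^ (n+1)) * Y0 := Sl1_mulVec _ _
        _ ≤ (CB * s ^ (n+1)) * Y0 := mul_le_mul_of_nonneg_right (hKB (n+1)) hY00
        _ ≤ (CB * t ^ n) * Y0 := by
            refine mul_le_mul_of_nonneg_right ?_ hY00
            refine mul_le_mul_of_nonneg_left ?_ hCB0
            calc s ^ (n+1) ≤ t ^ (n+1) := pow_le_pow_left₀ hs0.le hst _
              _ ≤ t ^ n := pow_le_pow_of_le_one ht0.le ht1.le (Nat.le_succ n)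
        _ = CB * Y0 * t ^ n := by ring
    have hterm : ∀ k ∈ Finset.range (n+1),
        ∑ i, |((B ^ (n - k)) *ᵥ (M k *ᵥ x k)) i| ≤ (CB * CM * CX) * t ^ n := by
      intro k hk
      have hkn : k ≤ n := by have := Finset.mem_range.mp hk; omega
      have hMx : ∑ j, |(M k *ᵥ x k) j| ≤ CM * (CX * r ^ k) := by
        calc ∑ j, |(M k *ᵥ x k) j| ≤ Kk (M k) * ∑ i, |x k i| := Sl1_mulVec _ _
          _ ≤ CM * (CX * r ^ k) := by
              refine mul_le_mul (hKM k) (hSx k) ?_ hCM0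
              exact Finset.sum_nonneg fun _ _ => abs_nonneg _
      calc ∑ i, |((B ^ (n - k)) *ᵥ (M k *ᵥ x k)) i|
          ≤ Kk (B ^ (n - k)) * ∑ j, |(M k *ᵥ x k) j| := Sl1_mulVec _ _
        _ ≤ (CB * s ^ (n - k)) * (CM * (CX * r ^ k)) := by
            refine mul_le_mul (hKB _) hMx ?_ ?_
            · exact Finset.sum_nonneg fun _ _ => abs_nonneg _
            · positivity
        _ = (CB * CM * CX) * (s ^ (n - k) * r ^ k) := by ring
        _ ≤ (CB * CM * CX) * t ^ n := by
            refine mul_le_mul_of_nonneg_left ?_ (by positivity)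
            have h1 : s ^ (n - k) * r ^ k ≤ t ^ (n - k) * t ^ k :=
              mul_le_mul (pow_le_pow_left₀ hs0.le hst _) (pow_le_pow_left₀ hr0.le hrt _)
                (pow_nonneg hr0.le _) (pow_nonneg ht0.le _)
            have h2 : t ^ (n - k) * t ^ k = t ^ n := by
              rw [← pow_add]; congr 1; omega
            rw [← h2]; exact h1
    calc ∑ i, |y (n+1) i|
        ≤ ∑ i, |((B ^ (n+1)) *ᵥ y 0) i|
          + ∑ i, |(∑ k ∈ Finset.range (n+1), (B ^ (n - k)) *ᵥ (M k *ᵥ x k)) i| := by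
          rw [hyform, ← Finset.sum_add_distrib]
          exact Finset.sum_le_sum fun i _ => abs_add_le _ _
      _ ≤ CB * Y0 * t ^ n
          + ∑ k ∈ Finset.range (n+1), ∑ i, |((B ^ (n - k)) *ᵥ (M k *ᵥ x k)) i| := by
          refine add_le_add hB1 ?_
          calc ∑ i, |(∑ k ∈ Finset.range (n+1), (B ^ (n - k)) *ᵥ (M k *ᵥ x k)) i|
              ≤ ∑ i, ∑ k ∈ Finset.range (n+1), |((B ^ (n - k)) *ᵥ (M k *ᵥ x k)) i| := by
                refine Finset.sum_le_sum fun i _ => ?_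
                rw [Finset.sum_apply]
                exact Finset.abs_sum_le_sum_abs _ _
            _ = ∑ k ∈ Finset.range (n+1), ∑ i, |((B ^ (n - k)) *ᵥ (M k *ᵥ x k)) i| :=
                Finset.sum_comm
      _ ≤ CB * Y0 * t ^ n + ((n:ℝ) + 1) * ((CB * CM * CX) * t ^ n) := by
          refine add_le_add_right ?_ _
          calc ∑ k ∈ Finset.range (n+1), ∑ i, |((B ^ (n - k)) *ᵥ (M k *ᵥ x k)) i|
              ≤ ∑ _k ∈ Finset.range (n+1), (CB * CM * CX) * t ^ n :=
                Finset.sum_le_sum hterm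
            _ = ((n:ℝ) + 1) * ((CB * CM * CX) * t ^ n) := by
                rw [Finset.sum_const, Finset.card_range, nsmul_eq_mul]
                push_cast; ring
      _ ≤ E * ((n:ℝ) + 2) * t ^ n := by
          have htn : (0:ℝ) ≤ t ^ n := pow_nonneg ht0.le _
          have h1 : (0:ℝ) ≤ CB * Y0 := by positivity
          have h2 : (0:ℝ) ≤ CB * CM * CX := by positivity
          rw [hEdef]
          nlinarith [mul_nonneg h1 htn, mul_nonneg h2 htn]
  rw [tendsto_pi_nhds]
  intro i
  rcases i with i | i
  · simp only [Pi.zero_apply]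
    have hbd : ∀ n, ‖μ n (Sum.inl i)‖ ≤ CX * r ^ n := by
      intro n
      rw [Real.norm_eq_abs]
      calc |μ n (Sum.inl i)| = |x n i| := rfl
        _ ≤ ∑ j, |x n j| :=
            Finset.single_le_sum (f := fun j => |x n j|) (fun _ _ => abs_nonneg _)
              (Finset.mem_univ i)
        _ ≤ CX * r ^ n := hSx n
    refine squeeze_zero_norm hbd ?_
    simpa using (tendsto_pow_atTop_nhds_zero_of_lt_one hr0.le hr1).const_mul CX
  · simp only [Pi.zero_apply]
    rw [← tendsto_add_atTop_iff_nat 1]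
    have hbd : ∀ n, ‖μ (n+1) (Sum.inr i)‖ ≤ E * ((n:ℝ) + 2) * t ^ n := by
      intro n
      rw [Real.norm_eq_abs]
      calc |μ (n+1) (Sum.inr i)| = |y (n+1) i| := rfl
        _ ≤ ∑ j, |y (n+1) j| :=
            Finset.single_le_sum (f := fun j => |y (n+1) j|) (fun _ _ => abs_nonneg _)
              (Finset.mem_univ i)
        _ ≤ E * ((n:ℝ) + 2) * t ^ n := hSy n
    refine squeeze_zero_norm hbd ?_
    have h1 : Tendsto (fun n : ℕ => (n:ℝ) ^ 1 * t ^ n) atTop (nhds 0) :=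
      tendsto_pow_const_mul_const_pow_of_lt_one 1 ht0.le ht1
    have h2 : Tendsto (fun n : ℕ => t ^ n) atTop (nhds 0) :=
      tendsto_pow_atTop_nhds_zero_of_lt_one ht0.le ht1
    have heq : (fun n : ℕ => E * ((n:ℝ) + 2) * t ^ n)
        = fun n : ℕ => E * ((n:ℝ) ^ 1 * t ^ n) + (2 * E) * t ^ n := by
      funext n; ring
    rw [heq]
    simpa using (h1.const_mul E).add (h2.const_mul (2 * E))
end

section
/- Let D = diag(D^s, D^f) with ρ(I^s + Δt D^s) < 1 and ρ(I^f + δt D^f) < 1, and consider the mean recursion μ_{n+1} = (I + D_n) μ_n where D_n = [[Δt D^s, 0],[(Δt − δt) R_n D^s, δt D^f]] with R_n ∈ ℝ^{d_f×d_s} a sequence of matrices with sup_n ‖R_n‖ < ∞. Then the spectrum of I + D_n is σ(I^s + Δt D^s) ∪ σ(I^f + δt D^f) for every n, and μ_n → 0 as n → ∞. -/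
open Matrix Filter

attribute [local instance] Matrix.frobeniusNormedAddCommGroup
attribute [local instance] Matrix.frobeniusNormedRing Matrix.frobeniusNormedAlgebra
attribute [local instance] Matrix.frobeniusNormedSpace Matrix.frobeniusIsBoundedSMul

namespace Stmt18Aux

lemma entry_norm_le {m n : Type*} [Fintype m] [Fintype n] (A : Matrix m n ℝ) (i : m) (j : n) :
    ‖A i j‖ ≤ ‖A‖ := by
  rw [Matrix.frobenius_norm_def]
  have h2 : (0:ℝ) ≤ ‖A i j‖ := norm_nonneg _
  have h1 : ‖A i j‖ ^ (2:ℝ) ≤ ∑ i, ∑ j, ‖A i j‖ ^ (2:ℝ) := by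
    calc ‖A i j‖ ^ (2:ℝ) ≤ ∑ j', ‖A i j'‖ ^ (2:ℝ) :=
          Finset.single_le_sum (fun _ _ => Real.rpow_nonneg (norm_nonneg _) _) (Finset.mem_univ j)
      _ ≤ ∑ i', ∑ j', ‖A i' j'‖ ^ (2:ℝ) :=
          Finset.single_le_sum (f := fun i' => ∑ j', ‖A i' j'‖ ^ (2:ℝ))
            (fun _ _ => Finset.sum_nonneg fun _ _ => Real.rpow_nonneg (norm_nonneg _) _)
            (Finset.mem_univ i)
  calc ‖A i j‖ = (‖A i j‖ ^ (2:ℝ)) ^ ((1:ℝ)/2) := by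
        rw [← Real.rpow_mul h2]; norm_num
    _ ≤ (∑ i, ∑ j, ‖A i j‖ ^ (2:ℝ)) ^ ((1:ℝ)/2) :=
        Real.rpow_le_rpow (Real.rpow_nonneg h2 _) h1 (by norm_num)

lemma mulVec_norm_le {m n : Type*} [Fintype m] [Fintype n] (A : Matrix m n ℝ) (v : n → ℝ) :
    ‖A *ᵥ v‖ ≤ (Fintype.card n : ℝ) * ‖A‖ * ‖v‖ := by
  have hnn : (0:ℝ) ≤ (Fintype.card n : ℝ) * ‖A‖ * ‖v‖ := by positivity
  rw [pi_norm_le_iff_of_nonneg hnn]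
  intro i
  have h : (A *ᵥ v) i = ∑ j, A i j * v j := by
    simp [Matrix.mulVec, dotProduct]
  rw [h]
  calc ‖∑ j, A i j * v j‖ ≤ ∑ j, ‖A i j * v j‖ := norm_sum_le _ _
    _ ≤ ∑ _j : n, ‖A‖ * ‖v‖ := by
        refine Finset.sum_le_sum fun j _ => ?_
        rw [norm_mul]
        exact mul_le_mul (entry_norm_le A i j) (norm_le_pi_norm v j) (norm_nonneg _)
          (norm_nonneg _)
    _ = (Fintype.card n : ℝ) * ‖A‖ * ‖v‖ := by
        rw [Finset.sum_const, Finset.card_univ, nsmul_eq_mul, mul_assoc]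

lemma mem_spectrum_iff_isRoot {n : Type*} [Fintype n] [DecidableEq n] (M : Matrix n n ℂ)
    (z : ℂ) : z ∈ spectrum ℂ M ↔ M.charpoly.IsRoot z := by
  rw [spectrum.mem_iff, Matrix.isUnit_iff_isUnit_det, isUnit_iff_ne_zero, not_ne_iff]
  have h1 : (charmatrix M).map (Polynomial.evalRingHom z) = algebraMap ℂ (Matrix n n ℂ) z - M := by
    ext i j
    by_cases hij : i = j <;>
      simp [charmatrix_apply, Matrix.diagonal_apply, Matrix.algebraMap_matrix_apply, hij,
        Matrix.sub_apply]
  have hdet : (algebraMap ℂ (Matrix n n ℂ) z - M).det = M.charpoly.eval z := by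
    rw [Matrix.charpoly]
    calc (algebraMap ℂ (Matrix n n ℂ) z - M).det
        = ((charmatrix M).map (Polynomial.evalRingHom z)).det := by rw [h1]
      _ = Polynomial.evalRingHom z (charmatrix M).det := by
            rw [RingHom.map_det, RingHom.mapMatrix_apply]
      _ = Polynomial.eval z (charmatrix M).det := rfl
  rw [hdet]
  exact Iff.rfl

lemma spectrum_fromBlocks_triangular {p q : Type*} [Fintype p] [DecidableEq p] [Fintype q]
    [DecidableEq q] (A : Matrix p p ℂ) (C : Matrix q p ℂ) (D : Matrix q q ℂ) :
    spectrum ℂ (Matrix.fromBlocks A 0 C D) = spectrum ℂ A ∪ spectrum ℂ D := by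
  ext z
  simp only [Set.mem_union, mem_spectrum_iff_isRoot, Matrix.charpoly_fromBlocks_zero₁₂,
    Polynomial.IsRoot, Polynomial.eval_mul, mul_eq_zero]

lemma geom_bound {k : ℕ} (A : Matrix (Fin k) (Fin k) ℝ)
    (h : spectralRadius ℂ (A.map (Complex.ofReal : ℝ → ℂ)) < 1) :
    ∃ C r : ℝ, 0 < r ∧ r < 1 ∧ 1 ≤ C ∧ ∀ n : ℕ, ‖A ^ n‖ ≤ C * r ^ n := by
  set B := A.map (Complex.ofReal : ℝ → ℂ) with hB
  haveI : CompleteSpace (Matrix (Fin k) (Fin k) ℂ) :=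
    FiniteDimensional.complete ℂ _
  have hnorm : ∀ n : ℕ, ‖A ^ n‖ = ‖B ^ n‖ := by
    intro n
    have hpow : B ^ n = (A ^ n).map (Complex.ofReal : ℝ → ℂ) := by
      induction n with
      | zero =>
        simp only [pow_zero]
        exact (Matrix.map_one _ Complex.ofReal_zero Complex.ofReal_one).symm
      | succ n ih =>
        rw [pow_succ, pow_succ, ih]
        show ((A ^ n).map ⇑Complex.ofRealHom) * A.map ⇑Complex.ofRealHom =
          (A ^ n * A).map ⇑Complex.ofRealHom
        exact Matrix.map_mul.symm
    rw [hpow, Matrix.frobenius_norm_map_eq _ _ fun a => Complex.norm_real a]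
  obtain ⟨t, ht1, ht2⟩ := exists_between h
  have ht0 : 0 < t := lt_of_le_of_lt zero_le ht1
  have httop : t ≠ ⊤ := (ht2.trans_le le_top).ne
  have hgel := spectrum.pow_nnnorm_pow_one_div_tendsto_nhds_spectralRadius B
  have hev : ∀ᶠ n : ℕ in atTop, (‖B ^ n‖₊ : ENNReal) ^ (1 / (n : ℝ)) < t :=
    hgel.eventually_lt_const ht1
  obtain ⟨N, hN⟩ := eventually_atTop.mp hev
  set r : ℝ := t.toReal with hr
  have hr0 : 0 < r := ENNReal.toReal_pos ht0.ne' httop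
  have hr1 : r < 1 := by
    have := (ENNReal.toReal_lt_toReal httop ENNReal.one_ne_top).mpr ht2
    simpa using this
  have hbig : ∀ n : ℕ, max N 1 ≤ n → ‖A ^ n‖ ≤ r ^ n := by
    intro n hn
    have hn1 : 1 ≤ n := le_trans (le_max_right _ _) hn
    have hnN : N ≤ n := le_trans (le_max_left _ _) hn
    have h1 : (‖B ^ n‖₊ : ENNReal) ^ (1 / (n : ℝ)) ≤ t := (hN n hnN).le
    have hne : (n : ℝ) ≠ 0 := Nat.cast_ne_zero.mpr (Nat.one_le_iff_ne_zero.mp hn1)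
    have h2 : (‖B ^ n‖₊ : ENNReal) ≤ t ^ (n : ℝ) := by
      have := ENNReal.rpow_le_rpow h1 (n.cast_nonneg)
      rwa [← ENNReal.rpow_mul, one_div, inv_mul_cancel₀ hne, ENNReal.rpow_one] at this
    have h3 : (‖B ^ n‖₊ : ENNReal) ≤ t ^ n := by rwa [← ENNReal.rpow_natCast t n]
    have h4 : ‖B ^ n‖ ≤ r ^ n := by
      have := ENNReal.toReal_mono (by simp [ENNReal.pow_ne_top httop]) h3
      simpa [ENNReal.toReal_pow] using this
    rw [hnorm n]
    exact h4
  set M := max N 1 with hM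
  refine ⟨(∑ i ∈ Finset.range M, ‖A ^ i‖ / r ^ i) + 1, r, hr0, hr1, ?_, ?_⟩
  · have : (0:ℝ) ≤ ∑ i ∈ Finset.range M, ‖A ^ i‖ / r ^ i :=
      Finset.sum_nonneg fun i _ => div_nonneg (norm_nonneg _) (pow_nonneg hr0.le _)
    linarith
  · intro n
    by_cases hn : n < M
    · have hle : ‖A ^ n‖ / r ^ n ≤ ∑ i ∈ Finset.range M, ‖A ^ i‖ / r ^ i :=
        Finset.single_le_sum (f := fun i => ‖A ^ i‖ / r ^ i)
          (fun i _ => div_nonneg (norm_nonneg _) (pow_nonneg hr0.le _))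
          (Finset.mem_range.mpr hn)
      have hrn : (0:ℝ) < r ^ n := pow_pos hr0 n
      rw [← div_le_iff₀ hrn]
      linarith
    · have h1 : ‖A ^ n‖ ≤ r ^ n := hbig n (le_of_not_gt hn)
      have hC1 : (1:ℝ) ≤ (∑ i ∈ Finset.range M, ‖A ^ i‖ / r ^ i) + 1 := by
        have : (0:ℝ) ≤ ∑ i ∈ Finset.range M, ‖A ^ i‖ / r ^ i :=
          Finset.sum_nonneg fun i _ => div_nonneg (norm_nonneg _) (pow_nonneg hr0.le _)
        linarith
      calc ‖A ^ n‖ ≤ r ^ n := h1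
        _ ≤ ((∑ i ∈ Finset.range M, ‖A ^ i‖ / r ^ i) + 1) * r ^ n :=
          le_mul_of_one_le_left (pow_nonneg hr0.le _) hC1

end Stmt18Aux

open Stmt18Aux

/-- For the mean recursion `μ_{n+1} = (I + D_n) μ_n` with
`D_n = [[Δt D^s, 0],[(Δt − δt) R_n D^s, δt D^f]]`, `ρ(I + Δt D^s) < 1`,
`ρ(I + δt D^f) < 1` and `sup_n ‖R_n‖ < ∞`, the spectrum of `I + D_n` equals
`σ(I + Δt D^s) ∪ σ(I + δt D^f)` for every `n`, and `μ_n → 0`. -/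
theorem stmt18 {ds df : ℕ} (Ds : Matrix (Fin ds) (Fin ds) ℝ)
    (Df : Matrix (Fin df) (Fin df) ℝ) (R : ℕ → Matrix (Fin df) (Fin ds) ℝ)
    (Δt δt : ℝ)
    (hρs : spectralRadius ℂ ((1 + Δt • Ds).map (Complex.ofReal : ℝ → ℂ)) < 1)
    (hρf : spectralRadius ℂ ((1 + δt • Df).map (Complex.ofReal : ℝ → ℂ)) < 1)
    (hR : ∃ c : ℝ, ∀ n : ℕ, ‖R n‖ ≤ c)
    (μ : ℕ → (Fin ds ⊕ Fin df → ℝ))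
    (hrec : ∀ n : ℕ, μ (n + 1) =
      (1 + Matrix.fromBlocks (Δt • Ds) 0 ((Δt - δt) • (R n * Ds)) (δt • Df)) *ᵥ μ n) :
    (∀ n : ℕ,
      spectrum ℂ ((1 + Matrix.fromBlocks (Δt • Ds) 0 ((Δt - δt) • (R n * Ds))
          (δt • Df)).map (Complex.ofReal : ℝ → ℂ)) =
        spectrum ℂ ((1 + Δt • Ds).map (Complex.ofReal : ℝ → ℂ)) ∪
          spectrum ℂ ((1 + δt • Df).map (Complex.ofReal : ℝ → ℂ))) ∧
    Tendsto μ atTop (nhds 0) := by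
  have hblock : ∀ n : ℕ, (1 : Matrix (Fin ds ⊕ Fin df) (Fin ds ⊕ Fin df) ℝ) +
      Matrix.fromBlocks (Δt • Ds) 0 ((Δt - δt) • (R n * Ds)) (δt • Df) =
      Matrix.fromBlocks (1 + Δt • Ds) 0 ((Δt - δt) • (R n * Ds)) (1 + δt • Df) := by
    intro n
    rw [← Matrix.fromBlocks_one, Matrix.fromBlocks_add]
    simp
  constructor
  · intro n
    rw [hblock n]
    have hmap : (Matrix.fromBlocks (1 + Δt • Ds) 0 ((Δt - δt) • (R n * Ds))
        (1 + δt • Df)).map (Complex.ofReal : ℝ → ℂ) =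
        Matrix.fromBlocks ((1 + Δt • Ds).map (Complex.ofReal : ℝ → ℂ)) 0
          (((Δt - δt) • (R n * Ds)).map (Complex.ofReal : ℝ → ℂ))
          ((1 + δt • Df).map (Complex.ofReal : ℝ → ℂ)) := by
      rw [Matrix.fromBlocks_map, Matrix.map_zero _ Complex.ofReal_zero]
    rw [hmap, spectrum_fromBlocks_triangular]
  · -- convergence
    set As : Matrix (Fin ds) (Fin ds) ℝ := 1 + Δt • Ds with hAs
    set Af : Matrix (Fin df) (Fin df) ℝ := 1 + δt • Df with hAf
    set Cm : ℕ → Matrix (Fin df) (Fin ds) ℝ := fun n => (Δt - δt) • (R n * Ds) with hCm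
    set x : ℕ → Fin ds → ℝ := fun n => μ n ∘ Sum.inl with hxdef
    set y : ℕ → Fin df → ℝ := fun n => μ n ∘ Sum.inr with hydef
    have hmu : ∀ n : ℕ, μ (n + 1) =
        Sum.elim (As *ᵥ x n) (Cm n *ᵥ x n + Af *ᵥ y n) := by
      intro n
      rw [hrec n, hblock n, Matrix.fromBlocks_mulVec]
      simp [Matrix.zero_mulVec]
      rfl
    have hx : ∀ n : ℕ, x (n + 1) = As *ᵥ x n := by
      intro n; funext i
      show μ (n + 1) (Sum.inl i) = _
      rw [hmu n]; rfl
    have hy : ∀ n : ℕ, y (n + 1) = Cm n *ᵥ x n + Af *ᵥ y n := by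
      intro n; funext i
      show μ (n + 1) (Sum.inr i) = _
      rw [hmu n]; rfl
    have hxn : ∀ n : ℕ, x n = As ^ n *ᵥ x 0 := by
      intro n
      induction n with
      | zero => simp [Matrix.one_mulVec]
      | succ n ih => rw [hx n, ih, Matrix.mulVec_mulVec, ← pow_succ']
    have hyn : ∀ n : ℕ, y n = Af ^ n *ᵥ y 0 +
        ∑ k ∈ Finset.range n, (Af ^ (n - 1 - k) * Cm k) *ᵥ x k := by
      intro n
      induction n with
      | zero => simp [Matrix.one_mulVec]
      | succ n ih =>
        rw [hy n, ih, Matrix.mulVec_add, Finset.sum_range_succ]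
        have h1 : Af *ᵥ (Af ^ n *ᵥ y 0) = Af ^ (n + 1) *ᵥ y 0 := by
          rw [Matrix.mulVec_mulVec, ← pow_succ']
        have h2 : Af *ᵥ (∑ k ∈ Finset.range n, (Af ^ (n - 1 - k) * Cm k) *ᵥ x k) =
            ∑ k ∈ Finset.range n, (Af ^ (n + 1 - 1 - k) * Cm k) *ᵥ x k := by
          rw [show Af *ᵥ (∑ k ∈ Finset.range n, (Af ^ (n - 1 - k) * Cm k) *ᵥ x k) =
              Af.mulVecLin (∑ k ∈ Finset.range n, (Af ^ (n - 1 - k) * Cm k) *ᵥ x k) from rfl,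
            map_sum]
          refine Finset.sum_congr rfl fun k hk => ?_
          have hk' : k < n := Finset.mem_range.mp hk
          have : n - 1 - k + 1 = n + 1 - 1 - k := by omega
          rw [Matrix.mulVecLin_apply, Matrix.mulVec_mulVec, ← Matrix.mul_assoc, ← pow_succ', this]
        have h3 : (Af ^ (n + 1 - 1 - n) * Cm n) *ᵥ x n = Cm n *ᵥ x n := by
          simp
        rw [h1, h2, h3]
        abel
    -- geometric bounds
    obtain ⟨Cs, rs, hrs0, hrs1, hCs1, hgs⟩ := geom_bound (1 + Δt • Ds) hρs
    obtain ⟨Cf, rf, hrf0, hrf1, hCf1, hgf⟩ := geom_bound (1 + δt • Df) hρf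
    obtain ⟨c, hc⟩ := hR
    have hc0 : (0:ℝ) ≤ c := le_trans (norm_nonneg (R 0)) (hc 0)
    set K : ℝ := |Δt - δt| * (c * ‖Ds‖) with hK
    have hK0 : 0 ≤ K := by positivity
    have hCmK : ∀ k : ℕ, ‖Cm k‖ ≤ K := by
      intro k
      rw [hCm]
      calc ‖(Δt - δt) • (R k * Ds)‖ = |Δt - δt| * ‖R k * Ds‖ := by
            rw [norm_smul, Real.norm_eq_abs]
        _ ≤ |Δt - δt| * (c * ‖Ds‖) := by
            refine mul_le_mul_of_nonneg_left ?_ (abs_nonneg _)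
            exact le_trans (Matrix.frobenius_norm_mul _ _)
              (mul_le_mul_of_nonneg_right (hc k) (norm_nonneg Ds))
    set r : ℝ := max rs rf with hrdef
    have hr0 : 0 < r := lt_of_lt_of_le hrs0 (le_max_left _ _)
    have hr1 : r < 1 := max_lt hrs1 hrf1
    have hgs' : ∀ n : ℕ, ‖As ^ n‖ ≤ Cs * r ^ n := fun n =>
      le_trans (hgs n) (mul_le_mul_of_nonneg_left
        (pow_le_pow_left₀ hrs0.le (le_max_left _ _) n) (by linarith))
    have hgf' : ∀ n : ℕ, ‖Af ^ n‖ ≤ Cf * r ^ n := fun n =>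
      le_trans (hgf n) (mul_le_mul_of_nonneg_left
        (pow_le_pow_left₀ hrf0.le (le_max_right _ _) n) (by linarith))
    set Kx : ℝ := (ds : ℝ) * Cs * ‖x 0‖ with hKx
    have hKx0 : 0 ≤ Kx := by positivity
    have hxb : ∀ n : ℕ, ‖x n‖ ≤ Kx * r ^ n := by
      intro n
      rw [hxn n]
      calc ‖As ^ n *ᵥ x 0‖ ≤ (Fintype.card (Fin ds) : ℝ) * ‖As ^ n‖ * ‖x 0‖ :=
            mulVec_norm_le _ _
        _ ≤ (ds : ℝ) * (Cs * r ^ n) * ‖x 0‖ := by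
            rw [Fintype.card_fin]
            exact mul_le_mul_of_nonneg_right
              (mul_le_mul_of_nonneg_left (hgs' n) (Nat.cast_nonneg ds)) (norm_nonneg _)
        _ = Kx * r ^ n := by rw [hKx]; ring
    set B : ℝ := (ds : ℝ) * (Cf * K) * Kx * r⁻¹ with hBdef
    have hB0 : 0 ≤ B := by positivity
    have hterm : ∀ n : ℕ, ∀ k ∈ Finset.range n,
        ‖(Af ^ (n - 1 - k) * Cm k) *ᵥ x k‖ ≤ B * r ^ n := by
      intro n k hk
      have hk' : k < n := Finset.mem_range.mp hk
      have hpow : r ^ (n - 1 - k) * r ^ k = r ^ (n - 1) := by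
        rw [← pow_add]
        congr 1
        omega
      have hmulnorm : ‖Af ^ (n - 1 - k) * Cm k‖ ≤ (Cf * r ^ (n - 1 - k)) * K :=
        le_trans (Matrix.frobenius_norm_mul _ _)
          (mul_le_mul (hgf' _) (hCmK k) (norm_nonneg _) (by positivity))
      calc ‖(Af ^ (n - 1 - k) * Cm k) *ᵥ x k‖
          ≤ (Fintype.card (Fin ds) : ℝ) * ‖Af ^ (n - 1 - k) * Cm k‖ * ‖x k‖ :=
            mulVec_norm_le _ _
        _ ≤ (ds : ℝ) * ((Cf * r ^ (n - 1 - k)) * K) * (Kx * r ^ k) := by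
            rw [Fintype.card_fin]
            exact mul_le_mul (mul_le_mul_of_nonneg_left hmulnorm (Nat.cast_nonneg ds))
              (hxb k) (norm_nonneg _) (by positivity)
        _ = (ds : ℝ) * (Cf * K) * Kx * (r ^ (n - 1 - k) * r ^ k) := by ring
        _ = (ds : ℝ) * (Cf * K) * Kx * r ^ (n - 1) := by rw [hpow]
        _ ≤ B * r ^ n := by
            rw [hBdef]
            have hr' : r ^ (n - 1) ≤ r⁻¹ * r ^ n := by
              rcases Nat.eq_zero_or_pos n with h0 | hpos
              · subst h0
                simp only [Nat.zero_sub, pow_zero, mul_one]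
                exact (one_le_inv₀ hr0).mpr hr1.le
              · have hrn : r ^ n = r * r ^ (n - 1) := by
                  rw [← pow_succ']
                  congr 1
                  omega
                rw [hrn, ← mul_assoc, inv_mul_cancel₀ hr0.ne', one_mul]
            calc (ds : ℝ) * (Cf * K) * Kx * r ^ (n - 1)
                ≤ (ds : ℝ) * (Cf * K) * Kx * (r⁻¹ * r ^ n) :=
                  mul_le_mul_of_nonneg_left hr' (by positivity)
              _ = (ds : ℝ) * (Cf * K) * Kx * r⁻¹ * r ^ n := by ring
    set Ky : ℝ := (df : ℝ) * Cf * ‖y 0‖ with hKy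
    have hyb : ∀ n : ℕ, ‖y n‖ ≤ Ky * r ^ n + B * ((n : ℝ) * r ^ n) := by
      intro n
      rw [hyn n]
      have h1 : ‖Af ^ n *ᵥ y 0‖ ≤ Ky * r ^ n := by
        calc ‖Af ^ n *ᵥ y 0‖ ≤ (Fintype.card (Fin df) : ℝ) * ‖Af ^ n‖ * ‖y 0‖ :=
              mulVec_norm_le _ _
          _ ≤ (df : ℝ) * (Cf * r ^ n) * ‖y 0‖ := by
              rw [Fintype.card_fin]
              exact mul_le_mul_of_nonneg_right
                (mul_le_mul_of_nonneg_left (hgf' n) (Nat.cast_nonneg df)) (norm_nonneg _)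
          _ = Ky * r ^ n := by rw [hKy]; ring
      have h2 : ‖∑ k ∈ Finset.range n, (Af ^ (n - 1 - k) * Cm k) *ᵥ x k‖
          ≤ (n : ℝ) * (B * r ^ n) := by
        calc ‖∑ k ∈ Finset.range n, (Af ^ (n - 1 - k) * Cm k) *ᵥ x k‖
            ≤ ∑ k ∈ Finset.range n, ‖(Af ^ (n - 1 - k) * Cm k) *ᵥ x k‖ := norm_sum_le _ _
          _ ≤ ∑ _k ∈ Finset.range n, B * r ^ n := Finset.sum_le_sum (hterm n)
          _ = (n : ℝ) * (B * r ^ n) := by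
              rw [Finset.sum_const, Finset.card_range, nsmul_eq_mul]
      calc ‖Af ^ n *ᵥ y 0 + ∑ k ∈ Finset.range n, (Af ^ (n - 1 - k) * Cm k) *ᵥ x k‖
          ≤ ‖Af ^ n *ᵥ y 0‖ + ‖∑ k ∈ Finset.range n, (Af ^ (n - 1 - k) * Cm k) *ᵥ x k‖ :=
            norm_add_le _ _
        _ ≤ Ky * r ^ n + (n : ℝ) * (B * r ^ n) := add_le_add h1 h2
        _ = Ky * r ^ n + B * ((n : ℝ) * r ^ n) := by ring
    -- limits
    have hpowlim : Tendsto (fun n : ℕ => r ^ n) atTop (nhds 0) :=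
      tendsto_pow_atTop_nhds_zero_of_lt_one hr0.le hr1
    have hnpowlim : Tendsto (fun n : ℕ => (n : ℝ) * r ^ n) atTop (nhds 0) :=
      tendsto_self_mul_const_pow_of_lt_one hr0.le hr1
    have hxblim : Tendsto (fun n : ℕ => Kx * r ^ n) atTop (nhds 0) := by
      simpa using hpowlim.const_mul Kx
    have hyblim : Tendsto (fun n : ℕ => Ky * r ^ n + B * ((n : ℝ) * r ^ n)) atTop (nhds 0) := by
      have := (hpowlim.const_mul Ky).add (hnpowlim.const_mul B)
      simpa using this
    rw [tendsto_pi_nhds]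
    intro i
    rcases i with i | i
    · refine squeeze_zero_norm (fun n => ?_) hxblim
      exact le_trans (norm_le_pi_norm (x n) i) (hxb n)
    · refine squeeze_zero_norm (fun n => ?_) hyblim
      exact le_trans (norm_le_pi_norm (y n) i) (hyb n)
end
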